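/- arXiv:2007.06970 — 2 statements merged into one kernel-verified Lean document; each statement's English description precedes it below -/
import Mathlib

section
/- Let 𝐗 = (X,𝕏) be a p-rough path controlled by ω on [0,T] and (H,H') ∈ 𝒟_X(ℝ^e). Then the geometrisation of the lift equals the lift along the geometrisation: g(↑_𝕏(H,H')) = ↑_{g𝕏}(H,H'). In particular, if 𝐗 is geometric then ↑_𝕏(H,H') is geometric. -/
open Filter Topology Set

noncomputable section

/-- `ω` is a control on `[0,T]`: continuous on the simplex, vanishing on the diagonal,
superadditive and nonnegative. -/
def IsControl (T : ℝ) (ω : ℝ → ℝ → ℝ) : Prop :=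
  ContinuousOn (fun q : ℝ × ℝ => ω q.1 q.2) {q : ℝ × ℝ | 0 ≤ q.1 ∧ q.1 ≤ q.2 ∧ q.2 ≤ T} ∧
    (∀ t : ℝ, 0 ≤ t → t ≤ T → ω t t = 0) ∧
    (∀ s u t : ℝ, 0 ≤ s → s ≤ u → u ≤ t → t ≤ T → ω s u + ω u t ≤ ω s t) ∧
    (∀ s t : ℝ, 0 ≤ s → s ≤ t → t ≤ T → 0 ≤ ω s t)

/-- Membership in `C^{1/r}_ω([0,T],V)`: continuity on `[0,T]` together with the increment
bound `‖Y_t − Y_s‖ ≤ C ω(s,t)^r`. -/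
def HolderPath (T r : ℝ) (ω : ℝ → ℝ → ℝ) {V : Type*} [NormedAddCommGroup V]
    (Y : ℝ → V) : Prop :=
  ContinuousOn Y (Set.Icc 0 T) ∧
    ∃ C : ℝ, ∀ s t : ℝ, 0 ≤ s → s ≤ t → t ≤ T → ‖Y t - Y s‖ ≤ C * ω s t ^ r

/-- `(X, XX)` is a `p`-rough path controlled by `ω` on `[0,T]`. -/
def IsRoughPath (T p : ℝ) (ω : ℝ → ℝ → ℝ) {d : ℕ}
    (X : ℝ → Fin d → ℝ) (XX : ℝ → ℝ → Fin d → Fin d → ℝ) : Prop :=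
  HolderPath T (1 / p) ω X ∧
    ContinuousOn (fun q : ℝ × ℝ => XX q.1 q.2) {q : ℝ × ℝ | 0 ≤ q.1 ∧ q.1 ≤ q.2 ∧ q.2 ≤ T} ∧
    (∃ C : ℝ, ∀ s t : ℝ, 0 ≤ s → s ≤ t → t ≤ T → ‖XX s t‖ ≤ C * ω s t ^ (2 / p)) ∧
    (∀ s u t : ℝ, 0 ≤ s → s ≤ u → u ≤ t → t ≤ T → ∀ α β : Fin d,
      XX s t α β = XX s u α β + (X u α - X s α) * (X t β - X u β) + XX u t α β)

/-- `(H, H')` is an `X`-controlled path with values in `V`; `H' t γ` is the Gubinelli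
derivative at time `t` in the direction of the `γ`-th coordinate. -/
def IsControlledPath (T p : ℝ) (ω : ℝ → ℝ → ℝ) {d : ℕ} (X : ℝ → Fin d → ℝ)
    {V : Type*} [NormedAddCommGroup V] [NormedSpace ℝ V]
    (H : ℝ → V) (H' : ℝ → Fin d → V) : Prop :=
  HolderPath T (1 / p) ω H ∧ HolderPath T (1 / p) ω H' ∧
    ∃ C : ℝ, ∀ s t : ℝ, 0 ≤ s → s ≤ t → t ≤ T →
      ‖H t - H s - ∑ γ, (X t γ - X s γ) • H' s γ‖ ≤ C * ω s t ^ (2 / p)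

/-- The bracket `[𝐗]` of the rough path `(X, XX)`. -/
def bracket {d : ℕ} (X : ℝ → Fin d → ℝ) (XX : ℝ → ℝ → Fin d → Fin d → ℝ)
    (s t : ℝ) (α β : Fin d) : ℝ :=
  (X t α - X s α) * (X t β - X s β) - (XX s t α β + XX s t β α)

/-- A partition of `[s,t]` into `n` consecutive intervals. -/
structure TimePartition (s t : ℝ) where
  n : ℕ
  pts : ℕ → ℝ
  mono : Monotone pts
  first : pts 0 = s
  last : pts n = t

/-- The mesh of a partition. -/
def TimePartition.mesh {s t : ℝ} (π : TimePartition s t) : ℝ :=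
  ⨆ i : Fin π.n, (π.pts (i.1 + 1) - π.pts i.1)

/-- The Riemann sum of a two-parameter summand along a partition. -/
def riemannSum {s t : ℝ} {V : Type*} [AddCommMonoid V]
    (π : TimePartition s t) (f : ℝ → ℝ → V) : V :=
  ∑ i ∈ Finset.range π.n, f (π.pts i) (π.pts (i + 1))

/-- `L` is the limit of the Riemann sums of `f` along every sequence of partitions of `[s,t]`
with mesh tending to `0`. -/
def RSumLimit {V : Type*} [AddCommMonoid V] [TopologicalSpace V] (s t : ℝ)
    (f : ℝ → ℝ → V) (L : V) : Prop :=
  ∀ π : ℕ → TimePartition s t,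
    Tendsto (fun n => (π n).mesh) atTop (𝓝 0) →
      Tendsto (fun n => riemannSum (π n) f) atTop (𝓝 L)

/-- The compensated Riemann summand `H_u X_{uv} + H'_u 𝕏_{uv}` of a controlled integrand
against a rough path. -/
def roughSummand {d e : ℕ} (X : ℝ → Fin d → ℝ) (XX : ℝ → ℝ → Fin d → Fin d → ℝ)
    (H : ℝ → Fin e → Fin d → ℝ) (H' : ℝ → Fin d → Fin e → Fin d → ℝ) :
    ℝ → ℝ → Fin e → ℝ :=
  fun u v k => (∑ γ, H u k γ * (X v γ - X u γ)) + ∑ α, ∑ β, H' u α k β * XX u v α β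

/-- The partial derivative `∂_α f^i (x)`. -/
def pderiv {m n : ℕ} (f : (Fin m → ℝ) → (Fin n → ℝ)) (x : Fin m → ℝ)
    (α : Fin m) (i : Fin n) : ℝ :=
  fderiv ℝ f x (Pi.single α 1) i

/-- The second partial derivative `∂_{αβ} f^k (x)`. -/
def pderiv2 {m n : ℕ} (f : (Fin m → ℝ) → (Fin n → ℝ)) (x : Fin m → ℝ)
    (α β : Fin m) (k : Fin n) : ℝ :=
  fderiv ℝ (fun y => fderiv ℝ f y (Pi.single β 1) k) x (Pi.single α 1)

lemma control_midpoint {T : ℝ} {ω : ℝ → ℝ → ℝ} (hω : IsControl T ω)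
    (s t : ℝ) (hs : 0 ≤ s) (hst : s ≤ t) (htT : t ≤ T) :
    ∃ u, s ≤ u ∧ u ≤ t ∧ ω s u ≤ ω s t / 2 ∧ ω u t ≤ ω s t / 2 := by
  obtain ⟨hcont, hdiag, hsup, hnn⟩ := hω
  have htT' : t ≤ T := htT
  have hsT : s ≤ T := hst.trans htT
  have h1 : ContinuousOn (fun u => ω s u) (Icc s t) := by
    exact hcont.comp (f := fun u : ℝ => ((s, u) : ℝ × ℝ))
      (Continuous.continuousOn (by fun_prop))
      (fun u hu => ⟨hs, hu.1, hu.2.trans htT⟩)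
  have h2 : ContinuousOn (fun u => ω u t) (Icc s t) := by
    exact hcont.comp (f := fun u : ℝ => ((u, t) : ℝ × ℝ))
      (Continuous.continuousOn (by fun_prop))
      (fun u hu => ⟨hs.trans hu.1, hu.2, htT⟩)
  have hg : ContinuousOn (fun u => ω s u - ω u t) (Icc s t) := h1.sub h2
  have hss : ω s s = 0 := hdiag s hs hsT
  have htt : ω t t = 0 := hdiag t (hs.trans hst) htT
  have hmem : (0 : ℝ) ∈ Icc ((fun u => ω s u - ω u t) s) ((fun u => ω s u - ω u t) t) := by
    simp only [hss, htt]
    constructor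
    · simp; linarith [hnn s t hs hst htT]
    · simp; linarith [hnn s t hs hst htT]
  obtain ⟨u, hu, hgu⟩ := intermediate_value_Icc hst hg hmem
  refine ⟨u, hu.1, hu.2, ?_, ?_⟩ <;>
  · have hsum := hsup s u t hs hu.1 hu.2 htT
    simp only at hgu
    linarith

lemma control_le {T : ℝ} {ω : ℝ → ℝ → ℝ} (hω : IsControl T ω)
    (s t : ℝ) (hs : 0 ≤ s) (hst : s ≤ t) (htT : t ≤ T) : ω s t ≤ ω 0 T := by
  obtain ⟨-, -, hsup, hnn⟩ := hω
  have h1 := hsup 0 s t le_rfl hs hst htT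
  have h2 := hsup 0 t T le_rfl (hs.trans hst) htT le_rfl
  have := hnn 0 s le_rfl hs (hst.trans htT)
  have := hnn t T (hs.trans hst) htT le_rfl
  linarith

lemma additive_vanish {T : ℝ} {ω : ℝ → ℝ → ℝ} (hω : IsControl T ω)
    (F : ℝ → ℝ → ℝ) (C θ : ℝ) (hθ : 1 < θ) (hC : 0 ≤ C)
    (hadd : ∀ s u t : ℝ, 0 ≤ s → s ≤ u → u ≤ t → t ≤ T → F s t = F s u + F u t)
    (hbnd : ∀ s t : ℝ, 0 ≤ s → s ≤ t → t ≤ T → |F s t| ≤ C * ω s t ^ θ) :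
    ∀ s t : ℝ, 0 ≤ s → s ≤ t → t ≤ T → F s t = 0 := by
  set k : ℝ := (2 : ℝ) ^ (1 - θ) with hk
  have hk0 : 0 < k := Real.rpow_pos_of_pos two_pos _
  have hk1 : k < 1 := Real.rpow_lt_one_of_one_lt_of_neg one_lt_two (by linarith)
  have key : ∀ n : ℕ, ∀ s t : ℝ, 0 ≤ s → s ≤ t → t ≤ T →
      |F s t| ≤ k ^ n * (C * ω s t ^ θ) := by
    intro n
    induction n with
    | zero => intro s t hs hst htT; simpa using hbnd s t hs hst htT
    | succ n ih =>
      intro s t hs hst htT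
      obtain ⟨u, hsu, hut, hω1, hω2⟩ := control_midpoint hω s t hs hst htT
      have huT : u ≤ T := hut.trans htT
      have h1 := ih s u hs hsu huT
      have h2 := ih u t (hs.trans hsu) hut htT
      have hωnn := hω.2.2.2 s t hs hst htT
      have hωsu := hω.2.2.2 s u hs hsu huT
      have hωut := hω.2.2.2 u t (hs.trans hsu) hut htT
      have hθ0 : (0:ℝ) ≤ θ := by linarith
      have e1 : ω s u ^ θ ≤ (ω s t / 2) ^ θ := Real.rpow_le_rpow hωsu hω1 hθ0
      have e2 : ω u t ^ θ ≤ (ω s t / 2) ^ θ := Real.rpow_le_rpow hωut hω2 hθ0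
      have ediv : (ω s t / 2) ^ θ = ω s t ^ θ / 2 ^ θ := Real.div_rpow hωnn (by norm_num : (0:ℝ) ≤ 2) θ
      have habs : |F s t| ≤ |F s u| + |F u t| := by
        rw [hadd s u t hs hsu hut htT]; exact abs_add_le _ _
      have hkn : (0:ℝ) ≤ k ^ n := (pow_pos hk0 n).le
      have step : |F s t| ≤ k ^ n * (C * (2 * (ω s t ^ θ / 2 ^ θ))) := by
        calc |F s t| ≤ |F s u| + |F u t| := habs
          _ ≤ k ^ n * (C * ω s u ^ θ) + k ^ n * (C * ω u t ^ θ) := add_le_add h1 h2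
          _ ≤ k ^ n * (C * (ω s t ^ θ / 2 ^ θ)) + k ^ n * (C * (ω s t ^ θ / 2 ^ θ)) := by
              rw [ediv] at e1 e2
              gcongr
          _ = k ^ n * (C * (2 * (ω s t ^ θ / 2 ^ θ))) := by ring
      have h2θ : (2:ℝ) * (ω s t ^ θ / 2 ^ θ) = k * ω s t ^ θ := by
        rw [hk, Real.rpow_sub two_pos, Real.rpow_one]
        field_simp
      rw [h2θ] at step
      calc |F s t| ≤ k ^ n * (C * (k * ω s t ^ θ)) := step
        _ = k ^ (n+1) * (C * ω s t ^ θ) := by ring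
  intro s t hs hst htT
  have hlim : Tendsto (fun n : ℕ => k ^ n * (C * ω s t ^ θ)) atTop (𝓝 0) := by
    have := tendsto_pow_atTop_nhds_zero_of_lt_one hk0.le hk1
    simpa using this.mul_const (C * ω s t ^ θ)
  have : |F s t| ≤ 0 :=
    le_of_tendsto_of_tendsto' tendsto_const_nhds hlim (fun n => key n s t hs hst htT)
  simpa [abs_nonpos_iff] using this

set_option maxHeartbeats 1000000 in
/-- Lifting commutes with geometrisation: the geometrisation of the lift
`↑_𝕏(H,H')` is the lift `↑_{g𝕏}(H,H')`; in particular lifts of geometric rough paths are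
geometric. -/
theorem statement11 (T p : ℝ) (hT : 0 ≤ T) (hp1 : 1 ≤ p) (hp3 : p < 3) (d e : ℕ)
    (ω : ℝ → ℝ → ℝ) (hω : IsControl T ω)
    (X : ℝ → Fin d → ℝ) (XX : ℝ → ℝ → Fin d → Fin d → ℝ)
    (hX : IsRoughPath T p ω X XX)
    (H : ℝ → Fin e → ℝ) (H' : ℝ → Fin d → Fin e → ℝ)
    (hH : IsControlledPath T p ω X H H')
    (HH : ℝ → ℝ → Fin e → Fin e → ℝ)
    (hHHrp : IsRoughPath T p ω H HH)
    (hHHlift : ∃ C θ : ℝ, 1 < θ ∧ ∀ s t : ℝ, 0 ≤ s → s ≤ t → t ≤ T →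
      ‖(fun (i j : Fin e) => HH s t i j -
          ∑ α, ∑ β, H' s α i * H' s β j * XX s t α β)‖ ≤ C * ω s t ^ θ)
    (GG : ℝ → ℝ → Fin e → Fin e → ℝ)
    (hGGrp : IsRoughPath T p ω H GG)
    (hGGlift : ∃ C θ : ℝ, 1 < θ ∧ ∀ s t : ℝ, 0 ≤ s → s ≤ t → t ≤ T →
      ‖(fun (i j : Fin e) => GG s t i j - ∑ α, ∑ β, H' s α i * H' s β j *
          ((XX s t α β - XX s t β α) / 2 + (X t α - X s α) * (X t β - X s β) / 2))‖
        ≤ C * ω s t ^ θ) :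
    (∀ s t : ℝ, 0 ≤ s → s ≤ t → t ≤ T → ∀ i j : Fin e,
      (HH s t i j - HH s t j i) / 2 + (H t i - H s i) * (H t j - H s j) / 2 = GG s t i j) ∧
    ((∀ s t : ℝ, 0 ≤ s → s ≤ t → t ≤ T → ∀ α β : Fin d, bracket X XX s t α β = 0) →
      ∀ s t : ℝ, 0 ≤ s → s ≤ t → t ≤ T → ∀ i j : Fin e, bracket H HH s t i j = 0) := by
  obtain ⟨CH, θH, hθH, hHHl⟩ := hHHlift
  obtain ⟨CG, θG, hθG, hGGl⟩ := hGGlift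
  obtain ⟨⟨-, C1, hC1⟩, -, C2, hC2⟩ := hH
  have hp0 : (0:ℝ) < p := lt_of_lt_of_le one_pos hp1
  set CH' : ℝ := max CH 0 with hCH'
  set CG' : ℝ := max CG 0 with hCG'
  set C1' : ℝ := max C1 0 with hC1'
  set C2' : ℝ := max C2 0 with hC2'
  set M : ℝ := max (ω 0 T) 1 with hM
  have hM1 : (1:ℝ) ≤ M := le_max_right _ _
  have hM0 : (0:ℝ) < M := lt_of_lt_of_le one_pos hM1
  set θ' : ℝ := min (min θH θG) (3 / p) with hθ'
  have h3p : (1:ℝ) < 3 / p := by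
    rw [lt_div_iff₀ hp0]; linarith
  have hθ'1 : (1:ℝ) < θ' := by
    simp only [hθ', lt_min_iff]
    exact ⟨⟨hθH, hθG⟩, h3p⟩
  have hθ'H : θ' ≤ θH := (min_le_left _ _).trans (min_le_left _ _)
  have hθ'G : θ' ≤ θG := (min_le_left _ _).trans (min_le_right _ _)
  have hθ'3 : θ' ≤ 3 / p := min_le_right _ _
  have hθ'4 : θ' ≤ 4 / p := hθ'3.trans (by
    rw [div_le_div_iff₀ hp0 hp0]; nlinarith)
  -- exponent reduction
  have powle : ∀ s t : ℝ, 0 ≤ s → s ≤ t → t ≤ T → ∀ θ : ℝ, θ' ≤ θ →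
      ω s t ^ θ ≤ M ^ (θ - θ') * ω s t ^ θ' := by
    intro s t hs hst htT θ hle
    have hωnn := hω.2.2.2 s t hs hst htT
    have hωM : ω s t ≤ M := (control_le hω s t hs hst htT).trans (le_max_left _ _)
    have hne : θ' + (θ - θ') ≠ 0 := by
      have : θ' + (θ - θ') = θ := by ring
      rw [this]; linarith
    calc ω s t ^ θ = ω s t ^ (θ' + (θ - θ')) := by congr 1; ring
      _ = ω s t ^ θ' * ω s t ^ (θ - θ') := Real.rpow_add' hωnn hne
      _ ≤ ω s t ^ θ' * M ^ (θ - θ') :=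
          mul_le_mul_of_nonneg_left (Real.rpow_le_rpow hωnn hωM (by linarith))
            (Real.rpow_nonneg hωnn _)
      _ = M ^ (θ - θ') * ω s t ^ θ' := mul_comm _ _
  -- componentwise bounds
  have hA : ∀ s t : ℝ, 0 ≤ s → s ≤ t → t ≤ T → ∀ i j : Fin e,
      |HH s t i j - ∑ α, ∑ β, H' s α i * H' s β j * XX s t α β| ≤ CH' * ω s t ^ θH := by
    intro s t hs hst htT i j
    have h0 := hHHl s t hs hst htT
    set f := fun (i j : Fin e) => HH s t i j - ∑ α, ∑ β, H' s α i * H' s β j * XX s t α β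
    have h1 : |f i j| ≤ ‖f‖ := le_trans (norm_le_pi_norm (f i) j) (norm_le_pi_norm f i)
    have hωnn := hω.2.2.2 s t hs hst htT
    calc |f i j| ≤ CH * ω s t ^ θH := h1.trans h0
      _ ≤ CH' * ω s t ^ θH := by
          apply mul_le_mul_of_nonneg_right (le_max_left _ _) (Real.rpow_nonneg hωnn _)
  have hB : ∀ s t : ℝ, 0 ≤ s → s ≤ t → t ≤ T → ∀ i j : Fin e,
      |GG s t i j - ∑ α, ∑ β, H' s α i * H' s β j *
        ((XX s t α β - XX s t β α) / 2 + (X t α - X s α) * (X t β - X s β) / 2)|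
        ≤ CG' * ω s t ^ θG := by
    intro s t hs hst htT i j
    have h0 := hGGl s t hs hst htT
    set f := fun (i j : Fin e) => GG s t i j - ∑ α, ∑ β, H' s α i * H' s β j *
        ((XX s t α β - XX s t β α) / 2 + (X t α - X s α) * (X t β - X s β) / 2)
    have h1 : |f i j| ≤ ‖f‖ := le_trans (norm_le_pi_norm (f i) j) (norm_le_pi_norm f i)
    have hωnn := hω.2.2.2 s t hs hst htT
    calc |f i j| ≤ CG * ω s t ^ θG := h1.trans h0
      _ ≤ CG' * ω s t ^ θG := by
          apply mul_le_mul_of_nonneg_right (le_max_left _ _) (Real.rpow_nonneg hωnn _)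
  have hR : ∀ s t : ℝ, 0 ≤ s → s ≤ t → t ≤ T → ∀ i : Fin e,
      |H t i - H s i - ∑ γ, (X t γ - X s γ) * H' s γ i| ≤ C2' * ω s t ^ (2 / p) := by
    intro s t hs hst htT i
    have h0 := hC2 s t hs hst htT
    have hcmp : (H t - H s - ∑ γ, (X t γ - X s γ) • H' s γ) i
        = H t i - H s i - ∑ γ, (X t γ - X s γ) * H' s γ i := by
      simp [Finset.sum_apply]
    have h1 := norm_le_pi_norm (H t - H s - ∑ γ, (X t γ - X s γ) • H' s γ) i
    rw [hcmp] at h1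
    have hωnn := hω.2.2.2 s t hs hst htT
    calc |H t i - H s i - ∑ γ, (X t γ - X s γ) * H' s γ i| ≤ C2 * ω s t ^ (2 / p) :=
        h1.trans h0
      _ ≤ C2' * ω s t ^ (2 / p) := by
          apply mul_le_mul_of_nonneg_right (le_max_left _ _) (Real.rpow_nonneg hωnn _)
  have hHb : ∀ s t : ℝ, 0 ≤ s → s ≤ t → t ≤ T → ∀ i : Fin e,
      |H t i - H s i| ≤ C1' * ω s t ^ (1 / p) := by
    intro s t hs hst htT i
    have h0 := hC1 s t hs hst htT
    have h1 := norm_le_pi_norm (H t - H s) i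
    have hωnn := hω.2.2.2 s t hs hst htT
    calc |H t i - H s i| = ‖(H t - H s) i‖ := by simp
      _ ≤ C1 * ω s t ^ (1 / p) := h1.trans h0
      _ ≤ C1' * ω s t ^ (1 / p) := by
          apply mul_le_mul_of_nonneg_right (le_max_left _ _) (Real.rpow_nonneg hωnn _)
  set K : ℝ := CH' * M ^ (θH - θ') + CG' * M ^ (θG - θ') + C1' * C2' * M ^ (3 / p - θ')
      + C2' * C2' / 2 * M ^ (4 / p - θ') with hK
  have hK0 : 0 ≤ K := by positivity
  have part1 : ∀ s t : ℝ, 0 ≤ s → s ≤ t → t ≤ T → ∀ i j : Fin e,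
      (HH s t i j - HH s t j i) / 2 + (H t i - H s i) * (H t j - H s j) / 2 = GG s t i j := by
    intro s t hs hst htT i j
    set F : ℝ → ℝ → ℝ := fun a b =>
      (HH a b i j - HH a b j i) / 2 + (H b i - H a i) * (H b j - H a j) / 2 - GG a b i j
      with hF
    have hadd : ∀ a u b : ℝ, 0 ≤ a → a ≤ u → u ≤ b → b ≤ T → F a b = F a u + F u b := by
      intro a u b ha hau hub hbT
      have c1 := hHHrp.2.2.2 a u b ha hau hub hbT i j
      have c2 := hHHrp.2.2.2 a u b ha hau hub hbT j i
      have c3 := hGGrp.2.2.2 a u b ha hau hub hbT i j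
      simp only [hF]
      rw [c1, c2, c3]; ring
    have hbnd : ∀ a b : ℝ, 0 ≤ a → a ≤ b → b ≤ T → |F a b| ≤ K * ω a b ^ θ' := by
      intro a b ha hab hbT
      have hωnn := hω.2.2.2 a b ha hab hbT
      set Si : ℝ := ∑ γ, (X b γ - X a γ) * H' a γ i with hSi
      set Sj : ℝ := ∑ γ, (X b γ - X a γ) * H' a γ j with hSj
      set P1 : ℝ := ∑ α, ∑ β, H' a α i * H' a β j * XX a b α β with hP1
      set P2 : ℝ := ∑ α, ∑ β, H' a α j * H' a β i * XX a b α β with hP2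
      have hswap : (∑ α, ∑ β, H' a α i * H' a β j * XX a b β α) = P2 := by
        rw [Finset.sum_comm]
        exact Finset.sum_congr rfl fun α _ => Finset.sum_congr rfl fun β _ => by ring
      have hQ : (∑ α, ∑ β, H' a α i * H' a β j *
          ((XX a b α β - XX a b β α) / 2 + (X b α - X a α) * (X b β - X a β) / 2))
          = (P1 - P2) / 2 + Si * Sj / 2 := by
        have e1 : ∀ α : Fin d, ∀ β : Fin d, H' a α i * H' a β j *
            ((XX a b α β - XX a b β α) / 2 + (X b α - X a α) * (X b β - X a β) / 2)
            = (H' a α i * H' a β j * XX a b α β) / 2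
              - (H' a α i * H' a β j * XX a b β α) / 2
              + (((X b α - X a α) * H' a α i) * ((X b β - X a β) * H' a β j)) / 2 :=
          fun α β => by ring
        simp_rw [e1, Finset.sum_add_distrib, Finset.sum_sub_distrib, ← Finset.sum_div]
        rw [hswap, ← Finset.sum_mul_sum]
        simp only [hSi, hSj, hP1]
        ring
      have hid : F a b = (HH a b i j - P1) / 2 - (HH a b j i - P2) / 2
          - (GG a b i j - ((P1 - P2) / 2 + Si * Sj / 2))
          + ((H b i - H a i - Si) * (H b j - H a j)
             + (H b i - H a i) * (H b j - H a j - Sj)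
             - (H b i - H a i - Si) * (H b j - H a j - Sj)) / 2 := by
        simp only [hF]; ring
      have tA1 : |HH a b i j - P1| ≤ CH' * (M ^ (θH - θ') * ω a b ^ θ') := by
        refine (hA a b ha hab hbT i j).trans ?_
        exact mul_le_mul_of_nonneg_left (powle a b ha hab hbT θH hθ'H) (le_max_right _ _)
      have tA2 : |HH a b j i - P2| ≤ CH' * (M ^ (θH - θ') * ω a b ^ θ') := by
        refine (hA a b ha hab hbT j i).trans ?_
        exact mul_le_mul_of_nonneg_left (powle a b ha hab hbT θH hθ'H) (le_max_right _ _)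
      have tB : |GG a b i j - ((P1 - P2) / 2 + Si * Sj / 2)|
          ≤ CG' * (M ^ (θG - θ') * ω a b ^ θ') := by
        rw [← hQ]
        refine (hB a b ha hab hbT i j).trans ?_
        exact mul_le_mul_of_nonneg_left (powle a b ha hab hbT θG hθ'G) (le_max_right _ _)
      have hRi := hR a b ha hab hbT i
      have hRj := hR a b ha hab hbT j
      have hHi := hHb a b ha hab hbT i
      have hHj := hHb a b ha hab hbT j
      rw [← hSi] at hRi
      rw [← hSj] at hRj
      have hm3 : ω a b ^ (2 / p) * ω a b ^ (1 / p) = ω a b ^ (3 / p) := by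
        rw [← Real.rpow_add' hωnn (by positivity), show (2:ℝ)/p + 1/p = 3/p by ring]
      have hm4 : ω a b ^ (2 / p) * ω a b ^ (2 / p) = ω a b ^ (4 / p) := by
        rw [← Real.rpow_add' hωnn (by positivity), show (2:ℝ)/p + 2/p = 4/p by ring]
      have hC1'0 : (0:ℝ) ≤ C1' := le_max_right _ _
      have hC2'0 : (0:ℝ) ≤ C2' := le_max_right _ _
      have t5 : |(H b i - H a i - Si) * (H b j - H a j)|
          ≤ C1' * C2' * (M ^ (3 / p - θ') * ω a b ^ θ') := by
        rw [abs_mul]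
        calc |H b i - H a i - Si| * |H b j - H a j|
            ≤ (C2' * ω a b ^ (2 / p)) * (C1' * ω a b ^ (1 / p)) := by
              apply mul_le_mul hRi hHj (abs_nonneg _) (by positivity)
          _ = C1' * C2' * ω a b ^ (3 / p) := by rw [← hm3]; ring
          _ ≤ C1' * C2' * (M ^ (3 / p - θ') * ω a b ^ θ') := by
              apply mul_le_mul_of_nonneg_left (powle a b ha hab hbT _ hθ'3) (by positivity)
      have t6 : |(H b i - H a i) * (H b j - H a j - Sj)|
          ≤ C1' * C2' * (M ^ (3 / p - θ') * ω a b ^ θ') := by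
        rw [abs_mul]
        calc |H b i - H a i| * |H b j - H a j - Sj|
            ≤ (C1' * ω a b ^ (1 / p)) * (C2' * ω a b ^ (2 / p)) := by
              apply mul_le_mul hHi hRj (abs_nonneg _) (by positivity)
          _ = C1' * C2' * ω a b ^ (3 / p) := by rw [← hm3]; ring
          _ ≤ C1' * C2' * (M ^ (3 / p - θ') * ω a b ^ θ') := by
              apply mul_le_mul_of_nonneg_left (powle a b ha hab hbT _ hθ'3) (by positivity)
      have t7 : |(H b i - H a i - Si) * (H b j - H a j - Sj)|
          ≤ C2' * C2' * (M ^ (4 / p - θ') * ω a b ^ θ') := by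
        rw [abs_mul]
        calc |H b i - H a i - Si| * |H b j - H a j - Sj|
            ≤ (C2' * ω a b ^ (2 / p)) * (C2' * ω a b ^ (2 / p)) := by
              apply mul_le_mul hRi hRj (abs_nonneg _) (by positivity)
          _ = C2' * C2' * ω a b ^ (4 / p) := by rw [← hm4]; ring
          _ ≤ C2' * C2' * (M ^ (4 / p - θ') * ω a b ^ θ') := by
              apply mul_le_mul_of_nonneg_left (powle a b ha hab hbT _ hθ'4) (by positivity)
      have habs : |F a b| ≤ |HH a b i j - P1| / 2 + |HH a b j i - P2| / 2
          + |GG a b i j - ((P1 - P2) / 2 + Si * Sj / 2)|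
          + (|(H b i - H a i - Si) * (H b j - H a j)|
             + |(H b i - H a i) * (H b j - H a j - Sj)|
             + |(H b i - H a i - Si) * (H b j - H a j - Sj)|) / 2 := by
        rw [hid, abs_le]
        constructor <;>
        · linarith [le_abs_self (HH a b i j - P1), neg_abs_le (HH a b i j - P1),
            le_abs_self (HH a b j i - P2), neg_abs_le (HH a b j i - P2),
            le_abs_self (GG a b i j - ((P1 - P2) / 2 + Si * Sj / 2)),
            neg_abs_le (GG a b i j - ((P1 - P2) / 2 + Si * Sj / 2)),
            le_abs_self ((H b i - H a i - Si) * (H b j - H a j)),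
            neg_abs_le ((H b i - H a i - Si) * (H b j - H a j)),
            le_abs_self ((H b i - H a i) * (H b j - H a j - Sj)),
            neg_abs_le ((H b i - H a i) * (H b j - H a j - Sj)),
            le_abs_self ((H b i - H a i - Si) * (H b j - H a j - Sj)),
            neg_abs_le ((H b i - H a i - Si) * (H b j - H a j - Sj))]
      calc |F a b| ≤ _ := habs
        _ ≤ K * ω a b ^ θ' := by
            simp only [hK]
            linarith [tA1, tA2, tB, t5, t6, t7]
    have := additive_vanish hω F K θ' hθ'1 hK0 hadd hbnd s t hs hst htT
    simp only [hF] at this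
    linarith
  refine ⟨part1, ?_⟩
  intro hbr s t hs hst htT i j
  have hHG : ∀ i j : Fin e, HH s t i j = GG s t i j := by
    intro i j
    set D : ℝ → ℝ → ℝ := fun a b => HH a b i j - GG a b i j with hD
    have hadd : ∀ a u b : ℝ, 0 ≤ a → a ≤ u → u ≤ b → b ≤ T → D a b = D a u + D u b := by
      intro a u b ha hau hub hbT
      have c1 := hHHrp.2.2.2 a u b ha hau hub hbT i j
      have c3 := hGGrp.2.2.2 a u b ha hau hub hbT i j
      simp only [hD]; rw [c1, c3]; ring
    have hbnd : ∀ a b : ℝ, 0 ≤ a → a ≤ b → b ≤ T → |D a b| ≤ K * ω a b ^ θ' := by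
      intro a b ha hab hbT
      have hωnn := hω.2.2.2 a b ha hab hbT
      have hQP : (∑ α, ∑ β, H' a α i * H' a β j *
          ((XX a b α β - XX a b β α) / 2 + (X b α - X a α) * (X b β - X a β) / 2))
          = ∑ α, ∑ β, H' a α i * H' a β j * XX a b α β := by
        refine Finset.sum_congr rfl fun α _ => Finset.sum_congr rfl fun β _ => ?_
        have hb := hbr a b ha hab hbT α β
        unfold bracket at hb
        have : (XX a b α β - XX a b β α) / 2 + (X b α - X a α) * (X b β - X a β) / 2
            = XX a b α β := by linarith
        rw [this]
      have hAb := hA a b ha hab hbT i j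
      have hBb := hB a b ha hab hbT i j
      rw [hQP] at hBb
      have hDab : D a b = (HH a b i j - ∑ α, ∑ β, H' a α i * H' a β j * XX a b α β)
          - (GG a b i j - ∑ α, ∑ β, H' a α i * H' a β j * XX a b α β) := by
        simp only [hD]; ring
      have h1 : |D a b| ≤ CH' * ω a b ^ θH + CG' * ω a b ^ θG := by
        rw [hDab]
        exact (abs_sub _ _).trans (add_le_add hAb hBb)
      have h2 : CH' * ω a b ^ θH ≤ CH' * (M ^ (θH - θ') * ω a b ^ θ') :=
        mul_le_mul_of_nonneg_left (powle a b ha hab hbT θH hθ'H) (le_max_right _ _)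
      have h3 : CG' * ω a b ^ θG ≤ CG' * (M ^ (θG - θ') * ω a b ^ θ') :=
        mul_le_mul_of_nonneg_left (powle a b ha hab hbT θG hθ'G) (le_max_right _ _)
      have hrest : 0 ≤ (C1' * C2' * M ^ (3 / p - θ')
          + C2' * C2' / 2 * M ^ (4 / p - θ')) * ω a b ^ θ' := by positivity
      have hKexp : K * ω a b ^ θ' = CH' * (M ^ (θH - θ') * ω a b ^ θ')
          + CG' * (M ^ (θG - θ') * ω a b ^ θ')
          + (C1' * C2' * M ^ (3 / p - θ')
             + C2' * C2' / 2 * M ^ (4 / p - θ')) * ω a b ^ θ' := by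
        rw [hK]; ring
      calc |D a b| ≤ CH' * ω a b ^ θH + CG' * ω a b ^ θG := h1
        _ ≤ CH' * (M ^ (θH - θ') * ω a b ^ θ') + CG' * (M ^ (θG - θ') * ω a b ^ θ') :=
            add_le_add h2 h3
        _ ≤ CH' * (M ^ (θH - θ') * ω a b ^ θ') + CG' * (M ^ (θG - θ') * ω a b ^ θ')
            + (C1' * C2' * M ^ (3 / p - θ')
               + C2' * C2' / 2 * M ^ (4 / p - θ')) * ω a b ^ θ' :=
            le_add_of_nonneg_right hrest
        _ = K * ω a b ^ θ' := hKexp.symm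
    have := additive_vanish hω D K θ' hθ'1 hK0 hadd hbnd s t hs hst htT
    simp only [hD] at this
    linarith
  have h1 := part1 s t hs hst htT i j
  have h2 := hHG i j
  unfold bracket
  linarith
end
end

section
/- Let 𝐗 = (X,𝕏) be a p-rough path controlled by ω on [0,T] and f : ℝ^d → ℝ^e infinitely differentiable. Then for all 0 ≤ s ≤ t ≤ T, the bracket of the pushforward satisfies [f_*𝐗]^{ij}_{st} = ∫_s^t ∂_α f^i(X) ∂_β f^j(X) d[𝐗]^{αβ}, where the right-hand side is the Young integral of u ↦ ∂_α f^i(X_u) ∂_β f^j(X_u) against the bracket increments [𝐗]. -/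
open Filter Topology Set

noncomputable section

private lemma kw_pi_abs_le {e : ℕ} (F : Fin e → Fin e → ℝ) (i j : Fin e) : |F i j| ≤ ‖F‖ := by
  calc |F i j| = ‖F i j‖ := (Real.norm_eq_abs _).symm
    _ ≤ ‖F i‖ := norm_le_pi_norm (F i) j
    _ ≤ ‖F‖ := norm_le_pi_norm F i

private lemma kw_clm_apply {d e : ℕ} (L : (Fin d → ℝ) →L[ℝ] (Fin e → ℝ)) (h : Fin d → ℝ)
    (i : Fin e) : L h i = ∑ α, h α * L (Pi.single α 1) i := by
  have hh : h = ∑ α, h α • (Pi.single α 1 : Fin d → ℝ) := by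
    ext β; rw [Finset.sum_apply]; simp [Pi.single_apply]
  conv_lhs => rw [hh]
  rw [map_sum, Finset.sum_apply]
  congr 1; ext α
  rw [map_smul]; simp [smul_eq_mul]

private lemma kw_rpow_chain (x ε c : ℝ) (hx : 0 ≤ x) (hxe : x ≤ ε) (hc : 1 ≤ c) :
    x ^ c ≤ ε ^ (c - 1) * x := by
  rcases eq_or_lt_of_le hx with h0 | h0
  · rw [← h0, Real.zero_rpow (by linarith)]; simp
  · have hxc : x ^ c = x ^ (c - 1) * x := by
      rw [← Real.rpow_add_one (ne_of_gt h0)]; ring_nf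
    rw [hxc]
    have := Real.rpow_le_rpow (le_of_lt h0) hxe (by linarith : (0:ℝ) ≤ c - 1)
    nlinarith [Real.rpow_nonneg hx (c - 1)]

private lemma kw_rpow_merge (x B a b : ℝ) (hx : 0 ≤ x) (hxB : x ≤ B) (ha : 0 < a)
    (hab : a ≤ b) : x ^ b ≤ (B + 1) ^ (b - a) * x ^ a := by
  rcases eq_or_lt_of_le hx with h0 | h0
  · rw [← h0, Real.zero_rpow (by linarith), Real.zero_rpow (by linarith)]; simp
  · have h1 : x ^ b = x ^ (b - a) * x ^ a := by
      rw [← Real.rpow_add h0]; ring_nf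
    rw [h1]
    have h2 : x ^ (b - a) ≤ (B + 1) ^ (b - a) :=
      Real.rpow_le_rpow hx (by linarith) (by linarith)
    nlinarith [Real.rpow_nonneg hx a, Real.rpow_nonneg hx (b - a)]

private lemma kw_taylor {d e : ℕ} (f : (Fin d → ℝ) → (Fin e → ℝ)) (hf : ContDiff ℝ (⊤ : ℕ∞) f)
    (R : ℝ) :
    ∃ K : ℝ, 0 ≤ K ∧ ∀ a ∈ Metric.closedBall (0 : Fin d → ℝ) R,
      ∀ b ∈ Metric.closedBall (0 : Fin d → ℝ) R,
      ‖f b - f a - fderiv ℝ f a (b - a)‖ ≤ K * ‖b - a‖ * ‖b - a‖ := by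
  have hdf : ContDiff ℝ (⊤ : ℕ∞) (fderiv ℝ f) := hf.fderiv_right (by simp)
  have hcont : ContinuousOn (fderiv ℝ (fderiv ℝ f)) (Metric.closedBall 0 R) :=
    (hdf.continuous_fderiv (by simp)).continuousOn
  obtain ⟨K, hK⟩ := (isCompact_closedBall (0 : Fin d → ℝ) R).exists_bound_of_continuousOn (f := fderiv ℝ (fderiv ℝ f)) hcont
  refine ⟨max K 0, le_max_right _ _, fun a ha b hb => ?_⟩
  have hLip : ∀ z ∈ Metric.closedBall (0 : Fin d → ℝ) R,
      ‖fderiv ℝ f z - fderiv ℝ f a‖ ≤ max K 0 * ‖z - a‖ := by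
    intro z hz
    exact (convex_closedBall _ _).norm_image_sub_le_of_norm_fderiv_le
      (fun x _ => (hdf.differentiable (by simp)).differentiableAt)
      (fun x hx => le_trans (hK x hx) (le_max_left _ _)) ha hz
  have hseg : segment ℝ a b ⊆ Metric.closedBall (0 : Fin d → ℝ) R :=
    (convex_closedBall _ _).segment_subset ha hb
  have hbound : ∀ z ∈ segment ℝ a b,
      ‖fderiv ℝ f z - fderiv ℝ f a‖ ≤ max K 0 * ‖b - a‖ := by
    intro z hz
    refine le_trans (hLip z (hseg hz)) ?_
    have hza : ‖z - a‖ ≤ ‖b - a‖ := by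
      obtain ⟨u, v, hu, hv, huv, rfl⟩ := hz
      have hz' : u • a + v • b - a = v • (b - a) := by
        have : u = 1 - v := by linarith
        rw [this]; module
      rw [hz', norm_smul, Real.norm_eq_abs, abs_of_nonneg hv]
      nlinarith [norm_nonneg (b - a)]
    nlinarith [le_max_right K 0, norm_nonneg (z - a), norm_nonneg (b - a)]
  exact (convex_segment a b).norm_image_sub_le_of_norm_fderiv_le'
    (fun x _ => (hf.differentiable (by simp)).differentiableAt)
    hbound (left_mem_segment ℝ a b) (right_mem_segment ℝ a b)

private lemma kw_unifcont (T : ℝ) (ω : ℝ → ℝ → ℝ)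
    (hc : ContinuousOn (fun q : ℝ × ℝ => ω q.1 q.2) {q : ℝ × ℝ | 0 ≤ q.1 ∧ q.1 ≤ q.2 ∧ q.2 ≤ T})
    (hd : ∀ t : ℝ, 0 ≤ t → t ≤ T → ω t t = 0) :
    ∀ ε > 0, ∃ δ > 0, ∀ u v : ℝ, 0 ≤ u → u ≤ v → v ≤ T → v - u < δ → ω u v ≤ ε := by
  intro ε hε
  set S : Set (ℝ × ℝ) := {q : ℝ × ℝ | 0 ≤ q.1 ∧ q.1 ≤ q.2 ∧ q.2 ≤ T}
  have hSsub : S ⊆ Set.Icc (0:ℝ) T ×ˢ Set.Icc (0:ℝ) T := by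
    rintro ⟨a, b⟩ ⟨h1, h2, h3⟩
    exact ⟨⟨h1, le_trans h2 h3⟩, ⟨le_trans h1 h2, h3⟩⟩
  have hSclosed : IsClosed S :=
    (isClosed_le continuous_const continuous_fst).inter
      ((isClosed_le continuous_fst continuous_snd).inter
        (isClosed_le continuous_snd continuous_const))
  have hScpt : IsCompact S :=
    (isCompact_Icc.prod isCompact_Icc).of_isClosed_subset hSclosed hSsub
  have hunif : UniformContinuousOn (fun q : ℝ × ℝ => ω q.1 q.2) S :=
    hScpt.uniformContinuousOn_of_continuous hc
  rw [Metric.uniformContinuousOn_iff] at hunif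
  obtain ⟨δ, hδ, hδ'⟩ := hunif ε hε
  refine ⟨δ, hδ, fun u v h0 huv hvT hlt => ?_⟩
  have h1 : (u, v) ∈ S := ⟨h0, huv, hvT⟩
  have h2 : (u, u) ∈ S := ⟨h0, le_refl u, le_trans huv hvT⟩
  have hdist : dist (u, v) ((u, u) : ℝ × ℝ) < δ := by
    rw [Prod.dist_eq]
    simp only [dist_self]
    rw [Real.dist_eq, abs_of_nonneg (by linarith : 0 ≤ v - u)]
    simp only [max_lt_iff]
    exact ⟨hδ, hlt⟩
  have hle := hδ' (u, v) h1 (u, u) h2 hdist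
  rw [hd u h0 (le_trans huv hvT)] at hle
  rw [Real.dist_eq, sub_zero] at hle
  exact le_of_lt (lt_of_le_of_lt (le_abs_self _) hle)

set_option maxHeartbeats 1000000 in
/-- Kunita–Watanabe for pushforwards: the bracket of `f_*𝐗` is the Young
integral of `∂f ⊗ ∂f (X)` against the bracket of `𝐗`. -/
theorem statement13 (T p : ℝ) (hT : 0 ≤ T) (hp1 : 1 ≤ p) (hp3 : p < 3) (d e : ℕ)
    (ω : ℝ → ℝ → ℝ) (hω : IsControl T ω)
    (X : ℝ → Fin d → ℝ) (XX : ℝ → ℝ → Fin d → Fin d → ℝ)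
    (hX : IsRoughPath T p ω X XX)
    (f : (Fin d → ℝ) → (Fin e → ℝ)) (hf : ContDiff ℝ (⊤ : ℕ∞) f)
    (YY : ℝ → ℝ → Fin e → Fin e → ℝ)
    (hYrp : IsRoughPath T p ω (fun t => f (X t)) YY)
    (hYpush : ∃ C θ : ℝ, 1 < θ ∧ ∀ s t : ℝ, 0 ≤ s → s ≤ t → t ≤ T →
      ‖(fun (i j : Fin e) => YY s t i j -
          ∑ α, ∑ β, pderiv f (X s) α i * pderiv f (X s) β j * XX s t α β)‖
        ≤ C * ω s t ^ θ) :
    ∀ s t : ℝ, 0 ≤ s → s ≤ t → t ≤ T →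
      RSumLimit s t (fun (u v : ℝ) (i j : Fin e) =>
        ∑ α, ∑ β, pderiv f (X u) α i * pderiv f (X u) β j * bracket X XX u v α β)
        (bracket (fun r => f (X r)) YY s t) := by
  obtain ⟨hωc, hωd, hωsup, hωnn⟩ := hω
  set Yf : ℝ → Fin e → ℝ := fun r => f (X r) with hYf
  obtain ⟨⟨hXc, Cx0, hXb0⟩, hXXc, hXXb, chen⟩ := hX
  obtain ⟨⟨hYc, Cy0, hYb0⟩, hYYc, hYYb, chenY⟩ := hYrp
  obtain ⟨Cp0, θ, hθ, hpush0⟩ := hYpush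
  have hp0 : (0:ℝ) < p := lt_of_lt_of_le one_pos hp1
  -- normalized constants
  set Cx : ℝ := max Cx0 0 with hCxdef
  have hCx : 0 ≤ Cx := le_max_right _ _
  have hXb : ∀ u v : ℝ, 0 ≤ u → u ≤ v → v ≤ T → ‖X v - X u‖ ≤ Cx * ω u v ^ (1/p) := by
    intro u v h1 h2 h3
    refine le_trans (hXb0 u v h1 h2 h3) ?_
    exact mul_le_mul_of_nonneg_right (le_max_left _ _) (Real.rpow_nonneg (hωnn u v h1 h2 h3) _)
  set Cy : ℝ := max Cy0 0 with hCydef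
  have hCy : 0 ≤ Cy := le_max_right _ _
  have hYb : ∀ u v : ℝ, 0 ≤ u → u ≤ v → v ≤ T → ‖Yf v - Yf u‖ ≤ Cy * ω u v ^ (1/p) := by
    intro u v h1 h2 h3
    refine le_trans (hYb0 u v h1 h2 h3) ?_
    exact mul_le_mul_of_nonneg_right (le_max_left _ _) (Real.rpow_nonneg (hωnn u v h1 h2 h3) _)
  set Cp : ℝ := max Cp0 0 with hCpdef
  have hCp : 0 ≤ Cp := le_max_right _ _
  have hpushc : ∀ u v : ℝ, 0 ≤ u → u ≤ v → v ≤ T → ∀ i j : Fin e,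
      |YY u v i j - ∑ α, ∑ β, pderiv f (X u) α i * pderiv f (X u) β j * XX u v α β|
        ≤ Cp * ω u v ^ θ := by
    intro u v h1 h2 h3 i j
    have h := hpush0 u v h1 h2 h3
    have hcb := kw_pi_abs_le (fun (i j : Fin e) => YY u v i j -
      ∑ α, ∑ β, pderiv f (X u) α i * pderiv f (X u) β j * XX u v α β) i j
    calc |YY u v i j - ∑ α, ∑ β, pderiv f (X u) α i * pderiv f (X u) β j * XX u v α β|
        ≤ Cp0 * ω u v ^ θ := le_trans hcb h
      _ ≤ Cp * ω u v ^ θ :=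
          mul_le_mul_of_nonneg_right (le_max_left _ _)
            (Real.rpow_nonneg (hωnn u v h1 h2 h3) _)
  -- ball and derivative bounds
  obtain ⟨R0, hR0⟩ := isCompact_Icc.exists_bound_of_continuousOn hXc
  have hXmem : ∀ u : ℝ, 0 ≤ u → u ≤ T → X u ∈ Metric.closedBall (0 : Fin d → ℝ) R0 := by
    intro u h1 h2
    rw [Metric.mem_closedBall, dist_zero_right]
    exact hR0 u ⟨h1, h2⟩
  obtain ⟨K2, hK2, htay⟩ := kw_taylor f hf R0
  obtain ⟨M0, hM0⟩ := (isCompact_closedBall (0 : Fin d → ℝ) R0).exists_bound_of_continuousOn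
    ((hf.continuous_fderiv (by simp)).continuousOn)
  set M : ℝ := max M0 0 with hMdef
  have hM : 0 ≤ M := le_max_right _ _
  have hMb : ∀ u : ℝ, 0 ≤ u → u ≤ T → ‖fderiv ℝ f (X u)‖ ≤ M := fun u h1 h2 =>
    le_trans (hM0 _ (hXmem u h1 h2)) (le_max_left _ _)
  -- diagonal vanishing
  have hYY0 : ∀ u : ℝ, 0 ≤ u → u ≤ T → ∀ i j : Fin e, YY u u i j = 0 := by
    intro u h1 h2 i j
    have h := chenY u u u h1 le_rfl le_rfl h2 i j
    simp only [sub_self, zero_mul, mul_zero, add_zero, zero_add] at h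
    linarith
  -- bracket additivity for the pushforward
  have hbadd : ∀ u v w : ℝ, 0 ≤ u → u ≤ v → v ≤ w → w ≤ T → ∀ i j : Fin e,
      bracket Yf YY u w i j = bracket Yf YY u v i j + bracket Yf YY v w i j := by
    intro u v w h1 h2 h3 h4 i j
    have c1 := chenY u v w h1 h2 h3 h4 i j
    have c2 := chenY u v w h1 h2 h3 h4 j i
    simp only [bracket]
    rw [c1, c2]
    ring
  -- exponents and global constants
  have h3p : 1 < 3 / p := (one_lt_div hp0).mpr hp3
  set θ₀ : ℝ := min (3/p) θ with hθ₀def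
  have hθ₀ : 1 < θ₀ := lt_min h3p hθ
  set Ω : ℝ := ω 0 T with hΩdef
  have hΩ0 : 0 ≤ Ω := hωnn 0 T le_rfl hT le_rfl
  have hΩuv : ∀ u v : ℝ, 0 ≤ u → u ≤ v → v ≤ T → ω u v ≤ Ω := by
    intro u v h1 h2 h3
    have a1 := hωsup 0 u v le_rfl h1 h2 h3
    have a2 := hωsup 0 v T le_rfl (le_trans h1 h2) h3 le_rfl
    have a3 := hωnn 0 u le_rfl h1 (le_trans h2 h3)
    have a4 := hωnn v T (le_trans h1 h2) h3 le_rfl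
    linarith
  set K1 : ℝ := K2 * Cx^2 * Cy + M * K2 * Cx^3 with hK1def
  have hK1 : 0 ≤ K1 := by positivity
  set K : ℝ := K1 * (Ω+1) ^ (3/p - θ₀) + 2*Cp * (Ω+1) ^ (θ - θ₀) with hKdef
  have hK : 0 ≤ K := by
    have e1 : (0:ℝ) ≤ (Ω+1) ^ (3/p - θ₀) := Real.rpow_nonneg (by linarith) _
    have e2 : (0:ℝ) ≤ (Ω+1) ^ (θ - θ₀) := Real.rpow_nonneg (by linarith) _
    have e3 := mul_nonneg hK1 e1
    have e4 := mul_nonneg hCp e2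
    rw [hKdef]
    linarith
  -- key pointwise estimate
  have hkey : ∀ u v : ℝ, 0 ≤ u → u ≤ v → v ≤ T → ∀ i j : Fin e,
      |(∑ α, ∑ β, pderiv f (X u) α i * pderiv f (X u) β j * bracket X XX u v α β)
        - bracket Yf YY u v i j| ≤ K * ω u v ^ θ₀ := by
    intro u v h1 h2 h3 i j
    have h0T : u ≤ T := le_trans h2 h3
    have hωuv : 0 ≤ ω u v := hωnn u v h1 h2 h3
    set w1 : ℝ := ω u v ^ (1/p) with hw1
    have hw1nn : 0 ≤ w1 := Real.rpow_nonneg hωuv _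
    have hrpadd : ∀ a b : ℝ, 0 < a → 0 < b → ω u v ^ a * ω u v ^ b = ω u v ^ (a+b) := by
      intro a b haa hbb
      rcases eq_or_lt_of_le hωuv with h0 | h0
      · rw [← h0, Real.zero_rpow (ne_of_gt haa), Real.zero_rpow (ne_of_gt hbb),
          Real.zero_rpow (ne_of_gt (by linarith))]
        ring
      · exact (Real.rpow_add h0 a b).symm
    set a : Fin e → ℝ := fun k => ∑ α, pderiv f (X u) α k * (X v α - X u α) with ha
    have haeq : ∀ k, a k = fderiv ℝ f (X u) (X v - X u) k := by
      intro k
      rw [kw_clm_apply]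
      apply Finset.sum_congr rfl
      intro α _
      simp [pderiv, Pi.sub_apply, mul_comm]
    have hF1 : ∀ k, |Yf v k - Yf u k - a k| ≤ K2 * ‖X v - X u‖ * ‖X v - X u‖ := by
      intro k
      have ht := htay (X u) (hXmem u h1 h0T) (X v) (hXmem v (le_trans h1 h2) h3)
      have hc : Yf v k - Yf u k - a k
          = (f (X v) - f (X u) - fderiv ℝ f (X u) (X v - X u)) k := by
        simp [haeq k, hYf, Pi.sub_apply]
      rw [hc, ← Real.norm_eq_abs]
      exact le_trans (norm_le_pi_norm _ k) ht
    have hF2 : ∀ k, |a k| ≤ M * ‖X v - X u‖ := by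
      intro k
      rw [haeq k, ← Real.norm_eq_abs]
      refine le_trans (norm_le_pi_norm _ k) ?_
      exact le_trans ((fderiv ℝ f (X u)).le_opNorm _)
        (mul_le_mul_of_nonneg_right (hMb u h1 h0T) (norm_nonneg _))
    have hF3 : ‖X v - X u‖ ≤ Cx * w1 := hXb u v h1 h2 h3
    have hF4 : ∀ k, |Yf v k - Yf u k| ≤ Cy * w1 := by
      intro k
      rw [← Real.norm_eq_abs]
      have hYk : Yf v k - Yf u k = (Yf v - Yf u) k := rfl
      rw [hYk]
      exact le_trans (norm_le_pi_norm _ k) (hYb u v h1 h2 h3)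
    have hG2 : a i * a j = ∑ α, ∑ β, pderiv f (X u) α i * pderiv f (X u) β j *
        ((X v α - X u α) * (X v β - X u β)) := by
      simp only [ha]
      rw [Finset.sum_mul_sum]
      apply Finset.sum_congr rfl; intro α _
      apply Finset.sum_congr rfl; intro β _
      ring
    have hswap : (∑ α, ∑ β, pderiv f (X u) α i * pderiv f (X u) β j * XX u v β α)
        = ∑ α, ∑ β, pderiv f (X u) α j * pderiv f (X u) β i * XX u v α β := by
      rw [Finset.sum_comm]
      apply Finset.sum_congr rfl; intro α _
      apply Finset.sum_congr rfl; intro β _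
      ring
    have hG1 : (∑ α, ∑ β, pderiv f (X u) α i * pderiv f (X u) β j * bracket X XX u v α β)
        = a i * a j
          - (∑ α, ∑ β, pderiv f (X u) α i * pderiv f (X u) β j * XX u v α β)
          - (∑ α, ∑ β, pderiv f (X u) α j * pderiv f (X u) β i * XX u v α β) := by
      rw [hG2, ← hswap, ← Finset.sum_sub_distrib, ← Finset.sum_sub_distrib]
      apply Finset.sum_congr rfl; intro α _
      rw [← Finset.sum_sub_distrib, ← Finset.sum_sub_distrib]
      apply Finset.sum_congr rfl; intro β _
      simp only [bracket]
      ring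
    have hsplit : (∑ α, ∑ β, pderiv f (X u) α i * pderiv f (X u) β j * bracket X XX u v α β)
        - bracket Yf YY u v i j
      = (a i * a j - (Yf v i - Yf u i) * (Yf v j - Yf u j))
        + (YY u v i j - ∑ α, ∑ β, pderiv f (X u) α i * pderiv f (X u) β j * XX u v α β)
        + (YY u v j i - ∑ α, ∑ β, pderiv f (X u) α j * pderiv f (X u) β i * XX u v α β) := by
      rw [hG1]
      simp only [bracket]
      ring
    rw [hsplit]
    have hxx : ‖X v - X u‖ * ‖X v - X u‖ ≤ (Cx * w1) * (Cx * w1) :=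
      mul_le_mul hF3 hF3 (norm_nonneg _) (by positivity)
    have hprod : |a i * a j - (Yf v i - Yf u i) * (Yf v j - Yf u j)|
        ≤ K1 * ω u v ^ (3/p) := by
      have e1 : a i * a j - (Yf v i - Yf u i) * (Yf v j - Yf u j)
          = -((Yf v i - Yf u i - a i) * (Yf v j - Yf u j)
              + a i * (Yf v j - Yf u j - a j)) := by ring
      have b1 : |(Yf v i - Yf u i - a i) * (Yf v j - Yf u j)|
          ≤ (K2 * (Cx*w1) * (Cx*w1)) * (Cy * w1) := by
        rw [abs_mul]
        refine mul_le_mul ?_ (hF4 j) (abs_nonneg _) (by positivity)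
        refine le_trans (hF1 i) ?_
        nlinarith
      have b2 : |a i * (Yf v j - Yf u j - a j)|
          ≤ (M * (Cx*w1)) * (K2 * (Cx*w1) * (Cx*w1)) := by
        rw [abs_mul]
        refine mul_le_mul ?_ ?_ (abs_nonneg _) (by positivity)
        · exact le_trans (hF2 i) (mul_le_mul_of_nonneg_left hF3 hM)
        · refine le_trans (hF1 j) ?_
          nlinarith
      have hw3 : w1 * (w1 * w1) = ω u v ^ (3/p) := by
        rw [hw1, hrpadd (1/p) (1/p) (by positivity) (by positivity),
          hrpadd (1/p) (1/p + 1/p) (by positivity) (by positivity)]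
        norm_num
        ring_nf
      calc |a i * a j - (Yf v i - Yf u i) * (Yf v j - Yf u j)|
          = |(Yf v i - Yf u i - a i) * (Yf v j - Yf u j)
              + a i * (Yf v j - Yf u j - a j)| := by rw [e1, abs_neg]
        _ ≤ |(Yf v i - Yf u i - a i) * (Yf v j - Yf u j)|
              + |a i * (Yf v j - Yf u j - a j)| := abs_add_le _ _
        _ ≤ (K2 * (Cx*w1) * (Cx*w1)) * (Cy * w1)
              + (M * (Cx*w1)) * (K2 * (Cx*w1) * (Cx*w1)) := add_le_add b1 b2
        _ = K1 * (w1 * (w1 * w1)) := by rw [hK1def]; ring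
        _ = K1 * ω u v ^ (3/p) := by rw [hw3]
    have hEij := hpushc u v h1 h2 h3 i j
    have hEji := hpushc u v h1 h2 h3 j i
    have m1 : K1 * ω u v ^ (3/p) ≤ K1 * ((Ω+1) ^ (3/p - θ₀) * ω u v ^ θ₀) :=
      mul_le_mul_of_nonneg_left
        (kw_rpow_merge (ω u v) Ω θ₀ (3/p) hωuv (hΩuv u v h1 h2 h3) (by linarith)
          (min_le_left _ _)) hK1
    have m2 : Cp * ω u v ^ θ ≤ Cp * ((Ω+1) ^ (θ - θ₀) * ω u v ^ θ₀) :=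
      mul_le_mul_of_nonneg_left
        (kw_rpow_merge (ω u v) Ω θ₀ θ hωuv (hΩuv u v h1 h2 h3) (by linarith)
          (min_le_right _ _)) hCp
    have hKeq : K * ω u v ^ θ₀
        = K1 * ((Ω+1) ^ (3/p - θ₀) * ω u v ^ θ₀)
          + 2 * (Cp * ((Ω+1) ^ (θ - θ₀) * ω u v ^ θ₀)) := by
      rw [hKdef]; ring
    calc |(a i * a j - (Yf v i - Yf u i) * (Yf v j - Yf u j))
          + (YY u v i j - ∑ α, ∑ β, pderiv f (X u) α i * pderiv f (X u) β j * XX u v α β)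
          + (YY u v j i - ∑ α, ∑ β, pderiv f (X u) α j * pderiv f (X u) β i * XX u v α β)|
        ≤ |(a i * a j - (Yf v i - Yf u i) * (Yf v j - Yf u j))
            + (YY u v i j - ∑ α, ∑ β, pderiv f (X u) α i * pderiv f (X u) β j * XX u v α β)|
          + |YY u v j i - ∑ α, ∑ β, pderiv f (X u) α j * pderiv f (X u) β i * XX u v α β| :=
          abs_add_le _ _
      _ ≤ (|a i * a j - (Yf v i - Yf u i) * (Yf v j - Yf u j)|
            + |YY u v i j - ∑ α, ∑ β, pderiv f (X u) α i * pderiv f (X u) β j * XX u v α β|)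
          + |YY u v j i - ∑ α, ∑ β, pderiv f (X u) α j * pderiv f (X u) β i * XX u v α β| :=
          add_le_add_left (abs_add_le _ _) _
      _ ≤ (K1 * ω u v ^ (3/p) + Cp * ω u v ^ θ) + Cp * ω u v ^ θ :=
          add_le_add (add_le_add hprod hEij) hEji
      _ ≤ K * ω u v ^ θ₀ := by rw [hKeq]; linarith
  -- now the limit statement
  intro s t hs hst htT
  have hbr0 : ∀ i j : Fin e, bracket Yf YY s s i j = 0 := by
    intro i j
    have e1 := hYY0 s hs (le_trans hst htT) i j
    have e2 := hYY0 s hs (le_trans hst htT) j i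
    simp [bracket, e1, e2]
  intro π hmesh
  have htel : ∀ P : TimePartition s t,
      riemannSum P (fun u v => bracket Yf YY u v) = bracket Yf YY s t := by
    intro P
    have hpt0 : ∀ i : ℕ, s ≤ P.pts i := fun i =>
      le_trans (le_of_eq P.first.symm) (P.mono (Nat.zero_le i))
    have hptt : ∀ i : ℕ, i ≤ P.n → P.pts i ≤ t := fun i hi =>
      le_trans (P.mono hi) (le_of_eq P.last)
    have hkeyi : ∀ i ∈ Finset.range P.n,
        (fun u v => bracket Yf YY u v) (P.pts i) (P.pts (i+1))
          = (fun k => bracket Yf YY s (P.pts k)) (i+1) - (fun k => bracket Yf YY s (P.pts k)) i := by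
      intro i hi
      have h2 : P.pts i ≤ P.pts (i+1) := P.mono (Nat.le_succ i)
      have h3 : P.pts (i+1) ≤ t := hptt (i+1) (Nat.succ_le_of_lt (Finset.mem_range.mp hi))
      have hb := hbadd s (P.pts i) (P.pts (i+1)) hs (hpt0 i) h2 (le_trans h3 htT)
      funext i' j'
      simp only [Pi.sub_apply]
      have := hb i' j'
      linarith
    calc riemannSum P (fun u v => bracket Yf YY u v)
        = ∑ i ∈ Finset.range P.n,
            ((fun k => bracket Yf YY s (P.pts k)) (i+1) - (fun k => bracket Yf YY s (P.pts k)) i) :=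
          Finset.sum_congr rfl hkeyi
      _ = (fun k => bracket Yf YY s (P.pts k)) P.n - (fun k => bracket Yf YY s (P.pts k)) 0 :=
          Finset.sum_range_sub (fun k => bracket Yf YY s (P.pts k)) P.n
      _ = bracket Yf YY s t := by
          simp only [P.last, P.first]
          funext i j
          simp only [Pi.sub_apply]
          rw [hbr0 i j, sub_zero]
  have hmesh_le : ∀ (P : TimePartition s t) (i : ℕ), i < P.n → P.pts (i+1) - P.pts i ≤ P.mesh := by
    intro P i hi
    show ((fun k : Fin P.n => P.pts (k.1+1) - P.pts k.1) ⟨i, hi⟩)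
      ≤ ⨆ k : Fin P.n, (P.pts (k.1+1) - P.pts k.1)
    exact le_ciSup (f := fun k : Fin P.n => P.pts (k.1+1) - P.pts k.1)
      (Set.Finite.bddAbove (Set.finite_range _)) ⟨i, hi⟩
  rw [Metric.tendsto_atTop]
  intro ε' hε'
  have hωst : 0 ≤ ω s t := hωnn s t hs hst htT
  set B : ℝ := K * ω s t + 1 with hBdef
  have hB : 0 < B := by nlinarith [mul_nonneg hK hωst]
  set ε : ℝ := (ε' / (2*B)) ^ ((θ₀ - 1)⁻¹) with hεdef
  have hquotpos : 0 < ε' / (2*B) := by positivity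
  have hεpos : 0 < ε := Real.rpow_pos_of_pos hquotpos _
  have hεpow : ε ^ (θ₀ - 1) = ε' / (2*B) := by
    rw [hεdef, ← Real.rpow_mul (le_of_lt hquotpos),
      inv_mul_cancel₀ (by linarith : θ₀ - 1 ≠ 0), Real.rpow_one]
  obtain ⟨δ, hδpos, hδ⟩ := kw_unifcont T ω hωc hωd ε hεpos
  rw [Metric.tendsto_atTop] at hmesh
  obtain ⟨N, hN⟩ := hmesh δ hδpos
  refine ⟨N, fun n hn => ?_⟩
  set P := π n with hP
  have hmeshlt : P.mesh < δ := by
    have h := hN n hn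
    rw [Real.dist_eq, sub_zero] at h
    exact lt_of_le_of_lt (le_abs_self _) h
  have hpt0 : ∀ i : ℕ, s ≤ P.pts i := fun i =>
    le_trans (le_of_eq P.first.symm) (P.mono (Nat.zero_le i))
  have hptt : ∀ i : ℕ, i ≤ P.n → P.pts i ≤ t := fun i hi =>
    le_trans (P.mono hi) (le_of_eq P.last)
  have hωi : ∀ i : ℕ, i < P.n → ω (P.pts i) (P.pts (i+1)) ≤ ε := by
    intro i hi
    refine hδ (P.pts i) (P.pts (i+1)) (le_trans hs (hpt0 i)) (P.mono (Nat.le_succ i))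
      (le_trans (hptt (i+1) (Nat.succ_le_of_lt hi)) htT) ?_
    exact lt_of_le_of_lt (hmesh_le P i hi) hmeshlt
  have hωsum : (∑ i ∈ Finset.range P.n, ω (P.pts i) (P.pts (i+1))) ≤ ω s t := by
    have hgen : ∀ m : ℕ, m ≤ P.n →
        (∑ i ∈ Finset.range m, ω (P.pts i) (P.pts (i+1))) ≤ ω s (P.pts m) := by
      intro m
      induction m with
      | zero =>
        intro _
        rw [Finset.sum_range_zero, P.first]
        exact hωnn s s hs le_rfl (le_trans hst htT)
      | succ m ih =>
        intro hm1
        have hm : m ≤ P.n := le_trans (Nat.le_succ m) hm1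
        rw [Finset.sum_range_succ]
        have hih := ih hm
        have h2 := hωsup s (P.pts m) (P.pts (m+1)) hs (hpt0 m) (P.mono (Nat.le_succ m))
          (le_trans (hptt (m+1) hm1) htT)
        linarith
    have h := hgen P.n le_rfl
    rw [P.last] at h
    exact h
  rw [dist_eq_norm]
  have hstep : ∀ i ∈ Finset.range P.n,
      ‖(fun (u v : ℝ) (i j : Fin e) =>
          ∑ α, ∑ β, pderiv f (X u) α i * pderiv f (X u) β j * bracket X XX u v α β)
            (P.pts i) (P.pts (i+1))
        - bracket Yf YY (P.pts i) (P.pts (i+1))‖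
      ≤ K * (ε ^ (θ₀ - 1) * ω (P.pts i) (P.pts (i+1))) := by
    intro i hi
    have hi' := Finset.mem_range.mp hi
    have h1 : 0 ≤ P.pts i := le_trans hs (hpt0 i)
    have h2 : P.pts i ≤ P.pts (i+1) := P.mono (Nat.le_succ i)
    have h3 : P.pts (i+1) ≤ T := le_trans (hptt (i+1) (Nat.succ_le_of_lt hi')) htT
    have hωinn : 0 ≤ ω (P.pts i) (P.pts (i+1)) := hωnn _ _ h1 h2 h3
    have hb1 : ‖(fun (u v : ℝ) (i j : Fin e) =>
          ∑ α, ∑ β, pderiv f (X u) α i * pderiv f (X u) β j * bracket X XX u v α β)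
            (P.pts i) (P.pts (i+1))
        - bracket Yf YY (P.pts i) (P.pts (i+1))‖
        ≤ K * ω (P.pts i) (P.pts (i+1)) ^ θ₀ := by
      rw [pi_norm_le_iff_of_nonneg (by positivity)]
      intro i'
      rw [pi_norm_le_iff_of_nonneg (by positivity)]
      intro j'
      rw [Pi.sub_apply, Pi.sub_apply, Real.norm_eq_abs]
      exact hkey (P.pts i) (P.pts (i+1)) h1 h2 h3 i' j'
    refine le_trans hb1 (mul_le_mul_of_nonneg_left ?_ hK)
    exact kw_rpow_chain (ω (P.pts i) (P.pts (i+1))) ε θ₀ hωinn (hωi i hi') (le_of_lt hθ₀)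
  calc ‖riemannSum P (fun (u v : ℝ) (i j : Fin e) =>
          ∑ α, ∑ β, pderiv f (X u) α i * pderiv f (X u) β j * bracket X XX u v α β)
        - bracket Yf YY s t‖
      = ‖∑ i ∈ Finset.range P.n,
          ((fun (u v : ℝ) (i j : Fin e) =>
            ∑ α, ∑ β, pderiv f (X u) α i * pderiv f (X u) β j * bracket X XX u v α β)
              (P.pts i) (P.pts (i+1))
            - bracket Yf YY (P.pts i) (P.pts (i+1)))‖ := by
        rw [← htel P]
        simp only [riemannSum, ← Finset.sum_sub_distrib]
    _ ≤ ∑ i ∈ Finset.range P.n,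
          ‖(fun (u v : ℝ) (i j : Fin e) =>
            ∑ α, ∑ β, pderiv f (X u) α i * pderiv f (X u) β j * bracket X XX u v α β)
              (P.pts i) (P.pts (i+1))
            - bracket Yf YY (P.pts i) (P.pts (i+1))‖ := norm_sum_le _ _
    _ ≤ ∑ i ∈ Finset.range P.n, K * (ε ^ (θ₀ - 1) * ω (P.pts i) (P.pts (i+1))) :=
        Finset.sum_le_sum hstep
    _ = K * ε ^ (θ₀ - 1) * ∑ i ∈ Finset.range P.n, ω (P.pts i) (P.pts (i+1)) := by
        rw [Finset.mul_sum]
        apply Finset.sum_congr rfl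
        intro i _
        ring
    _ ≤ K * ε ^ (θ₀ - 1) * ω s t := by
        refine mul_le_mul_of_nonneg_left hωsum ?_
        have : (0:ℝ) ≤ ε ^ (θ₀ - 1) := Real.rpow_nonneg (le_of_lt hεpos) _
        nlinarith
    _ < ε' := by
        rw [hεpow]
        have h1 : K * ω s t < B := by rw [hBdef]; linarith
        calc K * (ε' / (2*B)) * ω s t = (K * ω s t) * (ε' / (2*B)) := by ring
          _ < B * (ε' / (2*B)) := mul_lt_mul_of_pos_right h1 hquotpos
          _ = ε' / 2 := by field_simp
          _ < ε' := by linarith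
end
end
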